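/- Assume boldface Π¹₁-determinacy. Let Q = (¹Q, ²Q) be a level ≤2 tree. Then Q is Π¹₂-wellfounded if and only if <^Q is a wellordering of rep(Q). -/

import Mathlib

noncomputable section

/-- Brouwer–Kleene strict order on finite sequences, relative to a strict order `lt`
on entries: `s <_BK t` iff `s` properly extends `t`, or at the least position where
both are defined and they differ, the entry of `s` is smaller; `[]` is greatest. -/
def BKltBy {α : Type*} (lt : α → α → Prop) : List α → List α → Prop
  | [], _ => False
  | _ :: _, [] => True
  | a :: s, b :: t => lt a b ∨ (a = b ∧ BKltBy lt s t)

/-- The Brouwer–Kleene order on finite sequences of natural numbers. -/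
def BKlt : List ℕ → List ℕ → Prop := BKltBy (· < ·)

/-- A level-1 tree: a set of nonempty finite sequences of naturals such that whenever
`s⌢(n) ∈ P`: if `s ≠ []` then `s ∈ P`, and `s⌢(m) ∈ P` for every `m < n`. -/
def IsLevel1Tree (P : Set (List ℕ)) : Prop :=
  (∀ s ∈ P, s ≠ []) ∧
  ∀ (s : List ℕ) (n : ℕ), s ++ [n] ∈ P →
    (s ≠ [] → s ∈ P) ∧ ∀ m < n, s ++ [m] ∈ P

/-- A level-1 tree is regular iff the sequence `(1)` is not in it. -/
def Regular1 (P : Set (List ℕ)) : Prop := ([1] : List ℕ) ∉ P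

/-- `P` is Π¹₁-wellfounded: there is no infinite branch through `P`. -/
def Pi11WF (P : Set (List ℕ)) : Prop :=
  ¬ ∃ x : ℕ → ℕ, ∀ n : ℕ, 0 < n → (List.ofFn fun i : Fin n => x i) ∈ P

/-- `rep(P)`: the pair `(p, none)` codes the element `(p)` and `(p, some n)` codes
`(p, n)`. -/
def Rep1 (P : Set (List ℕ)) : Set (List ℕ × Option ℕ) := {x | x.1 ∈ P}

def optNatLt : Option ℕ → Option ℕ → Prop
  | some n, some m => n < m
  | some _, none => True
  | _, _ => False

/-- The order `<^P` on `rep(P)`. -/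
def Rep1lt (x y : List ℕ × Option ℕ) : Prop :=
  BKlt x.1 y.1 ∨ (x.1 = y.1 ∧ optNatLt x.2 y.2)

/-- The first uncountable ordinal. -/
def omega1 : Ordinal := (Cardinal.aleph 1).ord

/-- The tuple `(f p)_{p ∈ P}` respects the level-1 tree `P`: each entry is a countable
limit ordinal and `p ↦ f p` is order preserving from `(P, <_BK)` to the ordinals. -/
def Respects1 (P : Set (List ℕ)) (f : List ℕ → Ordinal) : Prop :=
  (∀ p ∈ P, f p < omega1 ∧ Order.IsSuccLimit (f p)) ∧
  ∀ p ∈ P, ∀ q ∈ P, BKlt p q → f p < f q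

/-- `σ` factors `(P, W)`: `σ(∅) = ∅` and `σ` preserves the Brouwer–Kleene order. -/
def Factors (P W : Set (List ℕ)) (σ : List ℕ → List ℕ) : Prop :=
  σ [] = [] ∧ (∀ p ∈ P, σ p ∈ insert ([] : List ℕ) W) ∧
  ∀ s ∈ insert ([] : List ℕ) P, ∀ t ∈ insert ([] : List ℕ) P,
    BKlt s t → BKlt (σ s) (σ t)

/-- Partial level ≤1 tree `(P, t)`; `t = none` codes the value `-1`. -/
def IsPartialLevelLe1Tree (P : Set (List ℕ)) (t : Option (List ℕ)) : Prop :=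
  P.Finite ∧ IsLevel1Tree P ∧ Regular1 P ∧
  (match t with
   | none => P.Nonempty
   | some s => s ∉ P ∧ IsLevel1Tree (insert s P) ∧ Regular1 (insert s P))

/-- The tuple coded by `f` on `P` together with the value `v` at `t` respects the
partial level ≤1 tree `(P, t)`. -/
def RespectsP1 (P : Set (List ℕ)) (t : Option (List ℕ)) (f : List ℕ → Ordinal)
    (v : Ordinal) : Prop :=
  match t with
  | none => Respects1 P f ∧ v < Ordinal.omega0
  | some s => Respects1 P f ∧
      Respects1 (insert s P) (fun p => if p = s then v else f p)

/-- A level-2 tree of uniform cofinalities. -/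
structure Level2Tree where
  dom : Set (List (List ℕ))
  tr : List (List ℕ) → Set (List ℕ)
  nd : List (List ℕ) → Option (List ℕ)
  nil_mem : [] ∈ dom
  take_mem : ∀ q ∈ dom, ∀ n : ℕ, q.take n ∈ dom
  lvl1 : ∀ q ∈ dom, IsLevel1Tree {a : List ℕ | q ++ [a] ∈ dom}
  tr_nil : tr [] = ∅
  nd_nil : nd [] = some [0]
  ptree : ∀ q ∈ dom, IsPartialLevelLe1Tree (tr q) (nd q)
  compl : ∀ q ∈ dom, ∀ l : ℕ, l < q.length →
    ∃ s : List ℕ, nd (q.take l) = some s ∧ tr (q.take (l + 1)) = insert s (tr (q.take l))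

/-- The node `Q_node(q)`, read as an element of `ℕ^{<ω}`. -/
def Level2Tree.ndVal (Q : Level2Tree) (q : List (List ℕ)) : List ℕ := (Q.nd q).getD []

/-- The interleaved sequence `ᾱ ⊕ q`. -/
def Level2Tree.oplus (Q : Level2Tree) (f : List ℕ → Ordinal) (q : List (List ℕ)) :
    List (Ordinal × Option (List ℕ)) :=
  (List.range q.length).map fun i => (f (Q.ndVal (q.take i)), some (q.getD i []))

/-- The interleaved sequence `ᾱ ⊕ q⌢(-1)`, where `v` is the entry of the tuple at
the node `Q_node(q)`. -/
def Level2Tree.oplusNeg (Q : Level2Tree) (f : List ℕ → Ordinal) (v : Ordinal)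
    (q : List (List ℕ)) : List (Ordinal × Option (List ℕ)) :=
  Q.oplus f q ++ [(v, none)]

def optNodeLt : Option (List ℕ) → Option (List ℕ) → Prop
  | none, some _ => True
  | some s, some t => BKlt s t
  | _, _ => False

def entryLt (x y : Ordinal × Option (List ℕ)) : Prop :=
  x.1 < y.1 ∨ (x.1 = y.1 ∧ optNodeLt x.2 y.2)

/-- The order `<^{²Q}` on interleaved sequences. -/
def Rep2lt : List (Ordinal × Option (List ℕ)) → List (Ordinal × Option (List ℕ)) → Prop :=
  BKltBy entryLt

/-- `rep(²Q)`. -/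
def Level2Tree.rep (Q : Level2Tree) : Set (List (Ordinal × Option (List ℕ))) :=
  {x | (∃ q ∈ Q.dom, ∃ f, Respects1 (Q.tr q) f ∧ x = Q.oplus f q) ∨
       (∃ q ∈ Q.dom, ∃ f v, RespectsP1 (Q.tr q) (Q.nd q) f v ∧ x = Q.oplusNeg f v q)}

/-- Π¹₂-wellfoundedness of a level-2 tree. -/
def Level2Tree.Pi12WF (Q : Level2Tree) : Prop :=
  (∀ q ∈ Q.dom, Pi11WF {a : List ℕ | q ++ [a] ∈ Q.dom}) ∧
  ∀ y : ℕ → List ℕ, (∀ n : ℕ, (List.ofFn fun i : Fin n => y i) ∈ Q.dom) →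
    ¬ Pi11WF (⋃ n : ℕ, Q.tr (List.ofFn fun i : Fin n => y i))

/-- The type of elements of `rep(Q)` for a level ≤2 tree `Q`: `inl` for the level-1
part, `inr` for the level-2 part. -/
abbrev RepLe2Elt := (List ℕ × Option ℕ) ⊕ (List (Ordinal × Option (List ℕ)))

/-- `rep(Q)` for the level ≤2 tree `Q = (P, Q₂)`. -/
def RepLe2 (P : Set (List ℕ)) (Q : Level2Tree) : Set RepLe2Elt :=
  {x | match x with
       | Sum.inl a => a ∈ Rep1 P
       | Sum.inr b => b ∈ Q.rep}

/-- The order `<^Q` for a level ≤2 tree: the level-1 part comes first. -/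
def RepLe2lt : RepLe2Elt → RepLe2Elt → Prop := Sum.Lex Rep1lt Rep2lt

/-- Π¹₂-wellfoundedness of a level ≤2 tree. -/
def Pi12WFle2 (P : Set (List ℕ)) (Q : Level2Tree) : Prop :=
  Pi11WF P ∧ Q.Pi12WF

/-- The sequence of the first `n` values of `x`. -/
def prefixSeq {α : Type*} (x : ℕ → α) (n : ℕ) : List α := List.ofFn fun i : Fin n => x i

/-- `σ` is a winning strategy for Player I (who plays at even rounds) in the game
with payoff set `A`. -/
def WinningStratI (A : Set (ℕ → ℕ)) (σ : List ℕ → ℕ) : Prop :=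
  ∀ x : ℕ → ℕ, (∀ n, x (2 * n) = σ (prefixSeq x (2 * n))) → x ∈ A

/-- `σ` is a winning strategy for Player II (who plays at odd rounds). -/
def WinningStratII (A : Set (ℕ → ℕ)) (σ : List ℕ → ℕ) : Prop :=
  ∀ x : ℕ → ℕ, (∀ n, x (2 * n + 1) = σ (prefixSeq x (2 * n + 1))) → x ∉ A

/-- The Gale–Stewart game with payoff `A` is determined. -/
def GameDetermined (A : Set (ℕ → ℕ)) : Prop :=
  (∃ σ, WinningStratI A σ) ∨ (∃ σ, WinningStratII A σ)

/-- `A` is analytic: the projection of a closed subset of the plane of Baire space,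
i.e., the projection of the set of branches of a set of pairs of finite sequences. -/
def IsAnalytic (A : Set (ℕ → ℕ)) : Prop :=
  ∃ T : Set (List ℕ × List ℕ),
    A = {x | ∃ y : ℕ → ℕ, ∀ n : ℕ, (prefixSeq x n, prefixSeq y n) ∈ T}

/-- Boldface Π¹₁-determinacy: every game with coanalytic payoff is determined. -/
def BoldfacePi11Determinacy : Prop :=
  ∀ A : Set (ℕ → ℕ), IsAnalytic Aᶜ → GameDetermined A

/-- An infinite level-1 tower. -/
def IsInfLevel1Tower (P : ℕ → Set (List ℕ)) : Prop :=
  ∀ i : ℕ, IsLevel1Tree (P i) ∧ (P i).Finite ∧ (P i).ncard = i ∧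
    ∀ j : ℕ, i < j → P i ⊆ P j

/-- `o` is a limit point of the set of ordinals `E`. -/
def IsLimitPtOf (E : Set Ordinal) (o : Ordinal) : Prop :=
  (∃ e ∈ E, e < o) ∧ ∀ b < o, ∃ e ∈ E, b < e ∧ e < o

/-- `E` is a club in `ω₁`. -/
def IsClubInOmega1 (E : Set Ordinal) : Prop :=
  (∀ o ∈ E, o < omega1) ∧
  (∀ o < omega1, ∃ e ∈ E, o < e) ∧
  ∀ o < omega1, IsLimitPtOf E o → o ∈ E

/-- The tuple coded by `f` lies in `[E]^{P↑}`. -/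
def RespectsIn (E : Set Ordinal) (P : Set (List ℕ)) (f : List ℕ → Ordinal) : Prop :=
  Respects1 P f ∧ ∀ p ∈ P, f p ∈ E ∧ IsLimitPtOf E (f p)

/-- The tuple coded by `(f, v)` lies in `[E]^{(P,t)↑}`. -/
def RespectsPIn (E : Set Ordinal) (P : Set (List ℕ)) (t : Option (List ℕ))
    (f : List ℕ → Ordinal) (v : Ordinal) : Prop :=
  RespectsP1 P t f v ∧ (∀ p ∈ P, f p ∈ E ∧ IsLimitPtOf E (f p)) ∧
  (t ≠ none → v ∈ E)

/-- `rep(²Q) ↾ E`. -/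
def Level2Tree.repRestrict (Q : Level2Tree) (E : Set Ordinal) :
    Set (List (Ordinal × Option (List ℕ))) :=
  {x | (∃ q ∈ Q.dom, ∃ f, RespectsIn E (Q.tr q) f ∧ x = Q.oplus f q) ∨
       (∃ q ∈ Q.dom, ∃ f v, RespectsPIn E (Q.tr q) (Q.nd q) f v ∧ x = Q.oplusNeg f v q)}

/-- `rep(Q) ↾ E` for a level ≤2 tree `Q = (P, Q₂)`. -/
def RepLe2Restrict (P : Set (List ℕ)) (Q : Level2Tree) (E : Set Ordinal) :
    Set RepLe2Elt :=
  {x | match x with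
       | Sum.inl a => a ∈ Rep1 P
       | Sum.inr b => b ∈ Q.repRestrict E}

/-- `C` is a closed subset of `X` in the order topology of the strict linear order
`lt` on `X`: `C` contains all of its one-sided limit points in `X`. -/
def OrderClosedIn {σ : Type*} (lt : σ → σ → Prop) (X C : Set σ) : Prop :=
  (∀ v ∈ X, (∃ w ∈ C, lt w v) →
      (∀ w ∈ X, lt w v → ∃ u ∈ C, lt w u ∧ lt u v) → v ∈ C) ∧
  (∀ v ∈ X, (∃ w ∈ C, lt v w) →
      (∀ w ∈ X, lt v w → ∃ u ∈ C, lt v u ∧ lt u w) → v ∈ C)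

end

section Aux
open List

variable {α : Type*} {lt : α → α → Prop}

theorem bk_append (t : List α) (a : α) (r : List α) : BKltBy lt (t ++ a :: r) t := by
  induction t with
  | nil => simp [BKltBy]
  | cons b t ih => exact Or.inr ⟨rfl, ih⟩

theorem bk_trans (h : ∀ a b c, lt a b → lt b c → lt a c) :
    ∀ t s u : List α, BKltBy lt s t → BKltBy lt t u → BKltBy lt s u := by
  intro t
  induction t with
  | nil => intro s u h1 h2; exact absurd h2 (by cases u <;> simp [BKltBy] at h2 ⊢)
  | cons b t ih =>
    intro s u h1 h2
    cases s with
    | nil => simp [BKltBy] at h1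
    | cons a s =>
      cases u with
      | nil => simp [BKltBy]
      | cons c u =>
        rcases h1 with h1 | ⟨rfl, h1⟩ <;> rcases h2 with h2 | ⟨rfl, h2⟩
        · exact Or.inl (h a b c h1 h2)
        · exact Or.inl h1
        · exact Or.inl h2
        · exact Or.inr ⟨rfl, ih s u h1 h2⟩

theorem bk_irrefl (h : ∀ a, ¬ lt a a) : ∀ s : List α, ¬ BKltBy lt s s := by
  intro s
  induction s with
  | nil => simp [BKltBy]
  | cons a s ih => rintro (hs | ⟨-, hs⟩); exact h a hs; exact ih hs

theorem bk_trichot (h : ∀ a b : α, lt a b ∨ a = b ∨ lt b a) :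
    ∀ s t : List α, BKltBy lt s t ∨ s = t ∨ BKltBy lt t s := by
  intro s
  induction s with
  | nil =>
    intro t; cases t with
    | nil => exact Or.inr (Or.inl rfl)
    | cons c u => exact Or.inr (Or.inr trivial)
  | cons a s ih =>
    intro t; cases t with
    | nil => exact Or.inl trivial
    | cons b t =>
      rcases h a b with hab | rfl | hba
      · exact Or.inl (Or.inl hab)
      · rcases ih t with h1 | rfl | h2
        · exact Or.inl (Or.inr ⟨rfl, h1⟩)
        · exact Or.inr (Or.inl rfl)
        · exact Or.inr (Or.inr (Or.inr ⟨rfl, h2⟩))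
      · exact Or.inr (Or.inr (Or.inl hba))

theorem bk_append_left (u : List α) {s t : List α} (h : BKltBy lt s t) :
    BKltBy lt (u ++ s) (u ++ t) := by
  induction u with
  | nil => exact h
  | cons a u ih => exact Or.inr ⟨rfl, ih⟩

theorem bk_strip (hirr : ∀ a, ¬ lt a a) (u : List α) {s t : List α}
    (h : BKltBy lt (u ++ s) (u ++ t)) : BKltBy lt s t := by
  induction u with
  | nil => exact h
  | cons a u ih => rcases h with h | ⟨-, h⟩; exact absurd h (hirr a); exact ih h

theorem desc_chain {β : Type*} {r : β → β → Prop} (htr : ∀ a b c, r a b → r b c → r a c)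
    {x : ℕ → β} (h : ∀ k, r (x (k + 1)) (x k)) : ∀ j k, j < k → r (x k) (x j) := by
  intro j k hjk
  induction k with
  | zero => omega
  | succ k ih =>
    rcases Nat.lt_succ_iff_lt_or_eq.mp hjk with h' | rfl
    · exact htr _ _ _ (h k) (ih h')
    · exact h j

theorem no_nat_desc (g : ℕ → ℕ) (h : ∀ j, g (j + 1) < g j) : False := by
  have : ∀ j, g j + j ≤ g 0 := by
    intro j; induction j with
    | zero => simp
    | succ j ih => have := h j; omega
  have := this (g 0 + 1); omega

theorem noDesc_of_wf {β : Type*} {r : β → β → Prop} (hwf : WellFounded r)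
    (x : ℕ → β) (h : ∀ k, r (x (k + 1)) (x k)) : False := by
  obtain ⟨b, ⟨k, rfl⟩, hmin⟩ := hwf.has_min (Set.range x) ⟨x 0, ⟨0, rfl⟩⟩
  exact hmin (x (k + 1)) ⟨k + 1, rfl⟩ (h k)

theorem no_opt_nat_desc (o : ℕ → Option ℕ) (h : ∀ k, optNatLt (o (k + 1)) (o k)) : False := by
  have hs : ∀ k, ∃ n, o (k + 1) = some n := by
    intro k
    cases ho : o (k + 1) with
    | some n => exact ⟨n, rfl⟩
    | none =>
      have := h k
      rw [ho] at this
      cases h2 : o k <;> rw [h2] at this <;> exact this.elim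
  have : ∀ k, (o (k + 2)).getD 0 < (o (k + 1)).getD 0 := by
    intro k
    obtain ⟨n, hn⟩ := hs k; obtain ⟨m, hm⟩ := hs (k + 1)
    have := h (k + 1); rw [hn, hm] at this ⊢
    simpa [optNatLt] using this
  exact no_nat_desc (fun k => (o (k + 1)).getD 0) this

end Aux
section Aux2
open List

theorem lexdesc {A B : Type*} (R : A → A → Prop) (S : B → B → Prop)
    (hR : ∀ a b c, R a b → R b c → R a c) (u : ℕ → A × B)
    (h : ∀ k, R (u (k + 1)).1 (u k).1 ∨ ((u (k + 1)).1 = (u k).1 ∧ S (u (k + 1)).2 (u k).2))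
    (hnd : ¬ ∃ t : ℕ → ℕ, StrictMono t ∧ ∀ j, R (u (t (j + 1))).1 (u (t j)).1) :
    ∃ K, ∀ k, K ≤ k → (u (k + 1)).1 = (u k).1 ∧ S (u (k + 1)).2 (u k).2 := by
  by_contra hc
  push_neg at hc
  have weak : ∀ j k, j ≤ k → (u k).1 = (u j).1 ∨ R (u k).1 (u j).1 := by
    intro j k hjk
    induction k with
    | zero => left; have hj0 : j = 0 := Nat.le_zero.mp hjk; rw [hj0]
    | succ k ih =>
      rcases Nat.lt_or_ge j (k + 1) with hj | hj
      · rcases ih (Nat.lt_succ_iff.mp hj) with he | hr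
        · rcases h k with h1 | ⟨h1, -⟩
          · right; rw [← he]; exact h1
          · left; rw [h1, he]
        · rcases h k with h1 | ⟨h1, -⟩
          · right; exact hR _ _ _ h1 hr
          · right; rw [h1]; exact hr
      · left; have : j = k + 1 := le_antisymm hjk hj; rw [this]
  have drop : ∀ K, ∃ k, K ≤ k ∧ R (u (k + 1)).1 (u k).1 := by
    intro K
    obtain ⟨k, hk, hk2⟩ := hc K
    refine ⟨k, hk, ?_⟩
    rcases h k with h1 | h1
    · exact h1
    · exact absurd h1.2 (hk2 h1.1)
  -- build strictly monotone sequence of drops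
  let m : ℕ → ℕ := fun j => Nat.rec ((drop 0).choose + 1)
    (fun _ prev => (drop prev).choose + 1) j
  have hm0 : m 0 = (drop 0).choose + 1 := rfl
  have hms : ∀ j, m (j + 1) = (drop (m j)).choose + 1 := fun j => rfl
  have hdropstep : ∀ j, R (u (m (j + 1))).1 (u (m j)).1 := by
    intro j
    obtain ⟨hge, hr⟩ := (drop (m j)).choose_spec
    rw [hms j]
    rcases weak (m j) (drop (m j)).choose hge with he | hw
    · rw [← he]; exact hr
    · exact hR _ _ _ hr hw
  have hmono : StrictMono m := by
    apply strictMono_nat_of_lt_succ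
    intro j
    have := (drop (m j)).choose_spec.1
    rw [hms j]; omega
  exact hnd ⟨m, hmono, hdropstep⟩

end Aux2
section Aux3
open List

theorem stab {α : Type*} [Inhabited α] {lt : α → α → Prop}
    (hirr : ∀ a, ¬ lt a a) (htr : ∀ a b c, lt a b → lt b c → lt a c)
    (x : ℕ → List α) (hdesc : ∀ k, BKltBy lt (x (k + 1)) (x k)) :
    (∃ y : ℕ → α, ∀ n, ∃ K, ∀ k, K ≤ k → n ≤ (x k).length ∧
        (x k).take n = List.ofFn (fun i : Fin n => y i))
    ∨ (∃ (m : ℕ) (t : ℕ → ℕ), (∀ j, m < (x (t j)).length) ∧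
        (∀ j, (x (t j)).take m = (x (t 0)).take m) ∧
        ∀ j, lt ((x (t (j + 1))).getD m default) ((x (t j)).getD m default)) := by
  classical
  set Pn : ℕ → Prop := fun n => ∃ K, ∀ k, K ≤ k → n ≤ (x k).length ∧ (x k).take n = (x K).take n
    with hPn
  by_cases hall : ∀ n, Pn n
  · left
    choose K hK using hall
    refine ⟨fun n => (x (K (n + 1))).getD n default, ?_⟩
    intro n
    refine ⟨(Finset.range (n + 1)).sup K, ?_⟩
    intro k hk
    have hKi : ∀ i, i ≤ n → K i ≤ k :=
      fun i hi => le_trans (Finset.le_sup (Finset.mem_range.mpr (by omega))) hk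
    have hlen : n ≤ (x k).length := (hK n k (hKi n le_rfl)).1
    refine ⟨hlen, ?_⟩
    apply List.ext_getElem
    · simp [List.length_take]; omega
    · intro i h1 h2
      have hin : i < n := by simpa using h2
      have hki := hK (i + 1) k (hKi (i + 1) hin)
      have hKK := hK (i + 1) (K (i + 1)) le_rfl
      have e1 : (x k).take (i + 1) = (x (K (i + 1))).take (i + 1) := by
        rw [hki.2, hKK.2]
      have hilen : i < (x k).length := by omega
      have hilen2 : i < (x (K (i + 1))).length := by have := hKK.1; omega
      have hi1 : i < ((x k).take (i + 1)).length := by simp [List.length_take]; omega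
      have hi2 : i < ((x (K (i + 1))).take (i + 1)).length := by simp [List.length_take]; omega
      rw [List.getElem_take, List.getElem_ofFn]
      show (x k)[i] = (x (K (i + 1))).getD i default
      rw [List.getD_eq_getElem _ _ hilen2]
      have hxx := List.getElem_of_eq e1 hi1
      simp only [List.getElem_take] at hxx
      exact hxx
  · right
    push_neg at hall
    have hex : ∃ n, ¬ Pn n := hall
    set n₀ := Nat.find hex with hn₀
    have hnn : ¬ Pn n₀ := Nat.find_spec hex
    have hltn : ∀ m, m < n₀ → Pn m := fun m hm => not_not.mp (Nat.find_min hex hm)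
    have h0 : Pn 0 := ⟨0, fun k _ => ⟨Nat.zero_le _, by simp⟩⟩
    have hn0 : n₀ ≠ 0 := fun h => hnn (h ▸ h0)
    obtain ⟨m, hm⟩ : ∃ m, n₀ = m + 1 := ⟨n₀ - 1, by omega⟩
    obtain ⟨K₀, hK₀⟩ := hltn m (by omega)
    set e := (x K₀).take m with he
    have hlene : e.length = m := by
      have := (hK₀ K₀ le_rfl).1
      simp [he, List.length_take]; omega
    have hxk_e : ∀ k, K₀ ≤ k → (x k).length = m → x k = e := by
      intro k hk hl
      have ht := (hK₀ k hk).2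
      rw [← ht, List.take_of_length_le (by omega)]
    have hchain : ∀ j k, j < k → BKltBy lt (x k) (x j) :=
      desc_chain (fun a b c h1 h2 => bk_trans htr b a c h1 h2) hdesc
    have hK₁ : ∃ K₁, K₀ ≤ K₁ ∧ ∀ k, K₁ ≤ k → m < (x k).length := by
      by_cases hone : ∃ k, K₀ ≤ k ∧ (x k).length = m
      · obtain ⟨k₁, hk₁, hlk₁⟩ := hone
        refine ⟨k₁ + 1, by omega, ?_⟩
        intro k hk
        have hm_le := (hK₀ k (by omega)).1
        rcases eq_or_lt_of_le hm_le with heq | hlt'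
        · exfalso
          have h1 : x k = e := hxk_e k (by omega) heq.symm
          have h2 : x k₁ = e := hxk_e k₁ hk₁ hlk₁
          have := hchain k₁ k (by omega)
          rw [h1, h2] at this
          exact bk_irrefl hirr e this
        · exact hlt'
      · push_neg at hone
        exact ⟨K₀, le_rfl, fun k hk =>
          lt_of_le_of_ne (hK₀ k hk).1 (fun h => hone k hk h.symm)⟩
    obtain ⟨K₁, hK₀₁, hlen₁⟩ := hK₁
    set b : ℕ → α := fun j => (x (K₁ + j)).getD m default with hb
    have hdecomp : ∀ k, K₁ ≤ k → ∃ r, x k = e ++ ((x k).getD m default) :: r := by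
      intro k hk
      have h1 : (x k).take m = e := (hK₀ k (le_trans hK₀₁ hk)).2
      have h2 : m < (x k).length := hlen₁ k hk
      have hdne : (x k).drop m ≠ [] := by
        intro hcon
        have := congrArg List.length hcon
        simp [List.length_drop] at this
        omega
      obtain ⟨a, r, har⟩ := List.exists_cons_of_ne_nil hdne
      refine ⟨r, ?_⟩
      have hsplit := List.take_append_drop m (x k)
      rw [h1, har] at hsplit
      have h0' : 0 < ((x k).drop m).length := by simp [List.length_drop]; omega
      have ha : a = (x k).getD m default := by
        have h6 : (x k).getD m default = a := by
          rw [List.getD_eq_getElem _ _ h2]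
          have h7 : (x k)[m] = ((x k).drop m)[0]'h0' := by
            rw [List.getElem_drop]
            simp
          rw [h7]
          simp [har]
        exact h6.symm
      rw [← ha, hsplit]
    have hstep : ∀ j, lt (b (j + 1)) (b j) ∨ b (j + 1) = b j := by
      intro j
      obtain ⟨r1, h1⟩ := hdecomp (K₁ + j) (by omega)
      obtain ⟨r2, h2⟩ := hdecomp (K₁ + j + 1) (by omega)
      have hd := hdesc (K₁ + j)
      rw [h1, h2] at hd
      have := bk_strip hirr e hd
      have hbj : b (j + 1) = (x (K₁ + j + 1)).getD m default := by
        simp [hb, Nat.add_assoc]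
      rcases this with h | ⟨h, -⟩
      · left; rw [hbj]; exact h
      · right; rw [hbj]; exact h
    have hnotconst : ∀ J, ∃ j, J ≤ j ∧ lt (b (j + 1)) (b j) := by
      by_contra hcc
      push_neg at hcc
      obtain ⟨J, hJ⟩ := hcc
      have hconst : ∀ j, J ≤ j → b j = b J := by
        intro j hj
        induction j with
        | zero => have : J = 0 := by omega
                  rw [this]
        | succ j ih =>
          rcases Nat.lt_or_ge J (j + 1) with h' | h'
          · have hj' : J ≤ j := by omega
            rcases hstep j with hs | hs
            · exact absurd hs (hJ j hj')
            · rw [hs]; exact ih hj'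
          · have : J = j + 1 := by omega
            rw [this]
      apply hnn
      rw [hm]
      refine ⟨K₁ + J, ?_⟩
      intro k hk
      have hkK₁ : K₁ ≤ k := by omega
      refine ⟨by have := hlen₁ k hkK₁; omega, ?_⟩
      have htake : ∀ k', K₁ ≤ k' → (x k').take (m + 1) = e ++ [(x k').getD m default] := by
        intro k' hk'
        obtain ⟨r, hr⟩ := hdecomp k' hk'
        conv_lhs => rw [hr]
        rw [show m + 1 = e.length + 1 by omega, List.take_append]
        simp
      have hgd : ∀ k', K₁ + J ≤ k' →
          (x k').getD m default = (x (K₁ + J)).getD m default := by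
        intro k' hk'
        have h8 : K₁ + (k' - K₁) = k' := by omega
        have h9 := hconst (k' - K₁) (by omega)
        simp only [hb] at h9
        rw [h8] at h9
        exact h9
      rw [htake k hkK₁, htake (K₁ + J) (by omega), hgd k hk]
    have weakb : ∀ i j, i ≤ j → b j = b i ∨ lt (b j) (b i) := by
      intro i j hij
      induction j with
      | zero => left; have : i = 0 := by omega
                rw [this]
      | succ j ih =>
        rcases Nat.lt_or_ge i (j + 1) with h' | h'
        · have hi' : i ≤ j := by omega
          rcases hstep j with hs | hs <;> rcases ih hi' with h2 | h2
          · right; rw [← h2]; exact hs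
          · right; exact htr _ _ _ hs h2
          · left; rw [hs, h2]
          · right; rw [hs]; exact h2
        · left; have : i = j + 1 := by omega
          rw [this]
    set nf : ℕ → ℕ := fun j => Nat.rec 0 (fun _ prev => (hnotconst prev).choose + 1) j with hnf
    have hnfs : ∀ j, nf (j + 1) = (hnotconst (nf j)).choose + 1 := fun j => rfl
    have hdropb : ∀ j, lt (b (nf (j + 1))) (b (nf j)) := by
      intro j
      obtain ⟨hge, hlt'⟩ := (hnotconst (nf j)).choose_spec
      rw [hnfs j]
      rcases weakb (nf j) (hnotconst (nf j)).choose hge with heq | hw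
      · rw [← heq]; exact hlt'
      · exact htr _ _ _ hlt' hw
    refine ⟨m, fun j => K₁ + nf j, ?_, ?_, ?_⟩
    · intro j
      show m < (x (K₁ + nf j)).length
      exact hlen₁ _ (by omega)
    · intro j
      show (x (K₁ + nf j)).take m = (x (K₁ + nf 0)).take m
      rw [(hK₀ (K₁ + nf j) (by omega)).2, (hK₀ (K₁ + nf 0) (by omega)).2]
    · intro j; exact hdropb j

end Aux3
section Aux4
open List

theorem nat_lt_irrefl' : ∀ a : ℕ, ¬ a < a := fun a => Nat.lt_irrefl a

theorem bklt_trichot : ∀ s t : List ℕ, BKlt s t ∨ s = t ∨ BKlt t s :=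
  bk_trichot (fun a b => by rcases Nat.lt_trichotomy a b with h | h | h <;> tauto)

theorem bklt_trans : ∀ a b c : List ℕ, BKlt a b → BKlt b c → BKlt a c := by
  have h := bk_trans (α := ℕ) (lt := (· < ·)) (fun _ _ _ h1 h2 => Nat.lt_trans h1 h2)
  exact fun a b c h1 h2 => h b a c h1 h2

theorem bklt_irrefl : ∀ s : List ℕ, ¬ BKlt s s := bk_irrefl nat_lt_irrefl'

/-- nonempty prefixes of members of a level-1 tree are members -/
theorem level1_take_mem {T : Set (List ℕ)} (hT : IsLevel1Tree T) :
    ∀ s ∈ T, ∀ n, 0 < n → n ≤ s.length → s.take n ∈ T := by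
  intro s hs
  suffices main : ∀ k n, 0 < n → n + k = s.length → s.take n ∈ T by
    intro n hn hns
    exact main (s.length - n) n hn (by omega)
  intro k
  induction k with
  | zero => intro n hn hk; rw [List.take_of_length_le (by omega)]; exact hs
  | succ k ih =>
    intro n hn hk
    have h1 : s.take (n + 1) ∈ T := ih (n + 1) (by omega) (by omega)
    have h2 : s.take (n + 1) = s.take n ++ [s.get ⟨n, by omega⟩] := by
      rw [List.take_succ]
      congr 1
      have : s[n]? = some (s.get ⟨n, by omega⟩) := List.getElem?_eq_getElem (by omega)
      rw [this]; rfl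
    rw [h2] at h1
    refine (hT.2 (s.take n) _ h1).1 ?_
    intro hcon
    have hlen := congrArg List.length hcon
    rw [List.length_take, Nat.min_eq_left (by omega : n ≤ s.length)] at hlen
    simp at hlen
    omega

/-- a BK-descending sequence through a prefix-closed set gives an infinite branch -/
theorem branch_of_bk_desc {D : Set (List ℕ)}
    (hcl : ∀ s ∈ D, ∀ n, 0 < n → n ≤ s.length → s.take n ∈ D)
    (x : ℕ → List ℕ) (hx : ∀ k, x k ∈ D) (hdesc : ∀ k, BKlt (x (k + 1)) (x k)) :
    ∃ z : ℕ → ℕ, ∀ n, 0 < n → (List.ofFn fun i : Fin n => z i) ∈ D := by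
  rcases stab nat_lt_irrefl' (fun _ _ _ => Nat.lt_trans) x hdesc with ⟨y, hy⟩ | ⟨m, t, _, _, hlt⟩
  · refine ⟨y, ?_⟩
    intro n hn
    obtain ⟨K, hK⟩ := hy n
    have := hK K le_rfl
    rw [← this.2]
    exact hcl (x K) (hx K) n hn this.1
  · exact (no_nat_desc (fun j => (x (t j)).getD m default) hlt).elim

theorem no_bk_desc_of_pi11wf {D : Set (List ℕ)} (hwf : Pi11WF D)
    (hcl : ∀ s ∈ D, ∀ n, 0 < n → n ≤ s.length → s.take n ∈ D) :
    ¬ ∃ x : ℕ → List ℕ, (∀ k, x k ∈ D) ∧ ∀ k, BKlt (x (k + 1)) (x k) := by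
  rintro ⟨x, hx, hdesc⟩
  exact hwf (branch_of_bk_desc hcl x hx hdesc)

theorem respects1_mono {T T' : Set (List ℕ)} (h : T ⊆ T') {f : List ℕ → Ordinal}
    (hf : Respects1 T' f) : Respects1 T f :=
  ⟨fun p hp => hf.1 p (h hp), fun p hp q hq hpq => hf.2 p (h hp) q (h hq) hpq⟩

theorem omega_mul_succ_isLimit (o : Ordinal) : Order.IsSuccLimit (Ordinal.omega0 * (o + 1)) := by
  rw [Ordinal.add_one_eq_succ, Ordinal.mul_succ]
  exact Ordinal.isSuccLimit_add _ Ordinal.isSuccLimit_omega0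

theorem omega_mul_succ_lt_omega1 {o : Ordinal} (ho : o.card ≤ Cardinal.aleph0) :
    Ordinal.omega0 * (o + 1) < omega1 := by
  rw [omega1, Cardinal.lt_ord]
  refine lt_of_le_of_lt ?_ Cardinal.aleph0_lt_aleph_one
  rw [Ordinal.card_mul, Ordinal.card_add]
  simp only [Ordinal.card_omega0, Ordinal.card_one]
  calc Cardinal.aleph0 * (o.card + 1)
      ≤ Cardinal.aleph0 * (Cardinal.aleph0 + Cardinal.aleph0) := by
        refine mul_le_mul' le_rfl (add_le_add ho ?_)
        exact Cardinal.one_le_aleph0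
    _ = Cardinal.aleph0 := by
        rw [Cardinal.aleph0_add_aleph0, Cardinal.aleph0_mul_aleph0]

/-- existence of a respecting tuple on a countable BK-no-descending set -/
theorem exists_respect (T : Set (List ℕ))
    (hnd : ¬ ∃ x : ℕ → List ℕ, (∀ k, x k ∈ T) ∧ ∀ k, BKlt (x (k + 1)) (x k)) :
    ∃ f, Respects1 T f := by
  classical
  let r : T → T → Prop := fun a b => BKlt a.1 b.1
  haveI hirr : IsIrrefl T r := ⟨fun a => bklt_irrefl a.1⟩
  haveI htr : IsTrans T r := ⟨fun a b c => bklt_trans a.1 b.1 c.1⟩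
  haveI : IsStrictOrder T r := ⟨⟩
  haveI htri : IsTrichotomous T r := by
    constructor
    intro a b hab hba
    rcases bklt_trichot a.1 b.1 with h | h | h
    · exact absurd h hab
    · exact Subtype.ext h
    · exact absurd h hba
  have hwf : WellFounded r := by
    rw [RelEmbedding.wellFounded_iff_isEmpty]
    constructor
    intro emb
    apply hnd
    refine ⟨fun k => (emb k).1, fun k => (emb k).2, fun k => ?_⟩
    exact emb.map_rel_iff.mpr (Nat.lt_succ_self k)
  haveI : IsWellFounded T r := ⟨hwf⟩
  haveI : IsWellOrder T r := ⟨⟩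
  refine ⟨fun p => if h : p ∈ T then
    Ordinal.omega0 * (Ordinal.lift.{u_1, 0} (Ordinal.typein r ⟨p, h⟩) + 1) else 0, ?_, ?_⟩
  · intro p hp
    dsimp only
    rw [dif_pos hp]
    have hcard : (Ordinal.lift.{u_1, 0} (Ordinal.typein r ⟨p, hp⟩)).card ≤ Cardinal.aleph0 := by
      rw [← Ordinal.lift_card, ← Cardinal.lift_aleph0.{u_1, 0}, Cardinal.lift_le]
      refine le_trans (Ordinal.card_le_card (le_of_lt (Ordinal.typein_lt_type r _))) ?_
      rw [Ordinal.card_type]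
      exact Cardinal.mk_le_aleph0
    exact ⟨omega_mul_succ_lt_omega1 hcard, omega_mul_succ_isLimit _⟩
  · intro p hp q hq hpq
    dsimp only
    rw [dif_pos hp, dif_pos hq]
    rw [mul_lt_mul_iff_right₀ Ordinal.omega0_pos]
    have h2 : r ⟨p, hp⟩ ⟨q, hq⟩ := hpq
    rw [← Ordinal.typein_lt_typein r] at h2
    rw [← Ordinal.lift_lt.{u_1, 0}] at h2
    rw [Ordinal.add_one_eq_succ, Ordinal.add_one_eq_succ]
    exact Order.succ_lt_succ h2

/-- no Rep1lt-descending sequence in Rep1 P when P is Π¹₁-wellfounded -/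
theorem no_rep1_desc {P : Set (List ℕ)} (hP : IsLevel1Tree P) (hwf : Pi11WF P)
    (u : ℕ → List ℕ × Option ℕ) (hu : ∀ k, u k ∈ Rep1 P)
    (hdesc : ∀ k, Rep1lt (u (k + 1)) (u k)) : False := by
  have hnd : ¬ ∃ t : ℕ → ℕ, StrictMono t ∧ ∀ j, BKlt (u (t (j + 1))).1 (u (t j)).1 := by
    rintro ⟨t, ht, hdrop⟩
    exact no_bk_desc_of_pi11wf hwf (level1_take_mem hP)
      ⟨fun j => (u (t j)).1, fun j => hu (t j), hdrop⟩
  obtain ⟨K, hK⟩ := lexdesc BKlt optNatLt bklt_trans u hdesc hnd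
  exact no_opt_nat_desc (fun k => (u (K + k)).2)
    (fun k => by have := (hK (K + k) (by omega)).2; simpa [Nat.add_assoc] using this)

end Aux4
section Aux5
open List

theorem optNodeLt_trans : ∀ a b c, optNodeLt a b → optNodeLt b c → optNodeLt a c := by
  rintro (_ | a) (_ | b) (_ | c) h1 h2 <;> simp [optNodeLt] at * <;>
    try exact bklt_trans _ _ _ h1 h2

theorem optNodeLt_irrefl : ∀ a, ¬ optNodeLt a a := by
  rintro (_ | a) h <;> simp [optNodeLt] at h
  exact bklt_irrefl a h

theorem optNodeLt_trichot : ∀ a b, optNodeLt a b ∨ a = b ∨ optNodeLt b a := by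
  rintro (_ | a) (_ | b)
  · right; left; rfl
  · left; trivial
  · right; right; trivial
  · rcases bklt_trichot a b with h | h | h
    · left; exact h
    · right; left; rw [h]
    · right; right; exact h

theorem entryLt_trans : ∀ a b c, entryLt a b → entryLt b c → entryLt a c := by
  rintro ⟨a1, a2⟩ ⟨b1, b2⟩ ⟨c1, c2⟩ (h1 | ⟨e1, h1⟩) (h2 | ⟨e2, h2⟩)
  · exact Or.inl (lt_trans h1 h2)
  · exact Or.inl (e2 ▸ h1)
  · exact Or.inl (e1 ▸ h2)
  · exact Or.inr ⟨e1.trans e2, optNodeLt_trans _ _ _ h1 h2⟩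

theorem entryLt_irrefl : ∀ a, ¬ entryLt a a := by
  rintro ⟨a1, a2⟩ (h | ⟨-, h⟩)
  · exact lt_irrefl _ h
  · exact optNodeLt_irrefl _ h

theorem entryLt_trichot : ∀ a b, entryLt a b ∨ a = b ∨ entryLt b a := by
  rintro ⟨a1, a2⟩ ⟨b1, b2⟩
  rcases lt_trichotomy a1 b1 with h | rfl | h
  · exact Or.inl (Or.inl h)
  · rcases optNodeLt_trichot a2 b2 with h | rfl | h
    · exact Or.inl (Or.inr ⟨rfl, h⟩)
    · exact Or.inr (Or.inl rfl)
    · exact Or.inr (Or.inr (Or.inr ⟨rfl, h⟩))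
  · exact Or.inr (Or.inr (Or.inl h))

namespace Level2Tree
variable (Q : Level2Tree)

theorem oplus_length (f : List ℕ → Ordinal) (q : List (List ℕ)) :
    (Q.oplus f q).length = q.length := by
  simp [Level2Tree.oplus]

theorem oplusNeg_length (f : List ℕ → Ordinal) (v : Ordinal) (q : List (List ℕ)) :
    (Q.oplusNeg f v q).length = q.length + 1 := by
  simp [Level2Tree.oplusNeg, oplus_length]

theorem oplus_getElem (f : List ℕ → Ordinal) (q : List (List ℕ)) (i : ℕ)
    (h : i < (Q.oplus f q).length) :
    (Q.oplus f q)[i] = (f (Q.ndVal (q.take i)), some (q.getD i [])) := by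
  simp [Level2Tree.oplus]

theorem oplus_getD (f : List ℕ → Ordinal) (q : List (List ℕ)) (i : ℕ) (d)
    (h : i < q.length) :
    (Q.oplus f q).getD i d = (f (Q.ndVal (q.take i)), some (q.getD i [])) := by
  rw [List.getD_eq_getElem _ _ (by rw [oplus_length]; exact h), oplus_getElem]

theorem oplus_take (f : List ℕ → Ordinal) (q : List (List ℕ)) (n : ℕ)
    (h : n ≤ q.length) : (Q.oplus f q).take n = Q.oplus f (q.take n) := by
  apply List.ext_getElem
  · simp [List.length_take, oplus_length]
  · intro i h1 h2
    have hi : i < n := by simp [List.length_take, oplus_length] at h1; omega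
    have hiq : i < q.length := by omega
    rw [List.getElem_take, oplus_getElem, oplus_getElem]
    have e1 : (q.take n).take i = q.take i := by
      rw [List.take_take, Nat.min_eq_left (by omega)]
    have e2 : (q.take n).getD i [] = q.getD i [] := by
      rw [List.getD_eq_getElem _ _ (by rw [List.length_take]; omega),
        List.getD_eq_getElem _ _ hiq, List.getElem_take]
    rw [e1, e2]

theorem oplusNeg_take (f : List ℕ → Ordinal) (v : Ordinal) (q : List (List ℕ)) (n : ℕ)
    (h : n ≤ q.length) : (Q.oplusNeg f v q).take n = Q.oplus f (q.take n) := by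
  rw [Level2Tree.oplusNeg, List.take_append_of_le_length (by rw [oplus_length]; exact h),
    oplus_take _ _ _ _ h]

theorem nodes_oplus (f : List ℕ → Ordinal) (q : List (List ℕ)) :
    (Q.oplus f q).map (fun en => en.2.getD []) = q := by
  apply List.ext_getElem
  · simp [oplus_length]
  · intro i h1 h2
    rw [List.getElem_map, oplus_getElem]
    simp only [Option.getD_some]
    rw [List.getD_eq_getElem _ _ h2]

theorem oplus_snoc (f : List ℕ → Ordinal) (q : List (List ℕ)) (p : List ℕ) :
    Q.oplus f (q ++ [p]) = Q.oplus f q ++ [(f (Q.ndVal q), some p)] := by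
  apply List.ext_getElem
  · simp [oplus_length]
  · intro i h1 h2
    have hi : i < q.length + 1 := by simpa [oplus_length] using h1
    rcases Nat.lt_or_ge i q.length with hiq | hiq
    · rw [oplus_getElem, List.getElem_append_left (by rwa [oplus_length]), oplus_getElem]
      congr 2
      · rw [List.take_append_of_le_length (by omega)]
      · rw [List.getD_eq_getElem _ _ (by simp; omega), List.getD_eq_getElem _ _ hiq,
          List.getElem_append_left hiq]
    · have hieq : i = q.length := by omega
      subst hieq
      rw [oplus_getElem, List.getElem_append_right (by rw [oplus_length])]
      have e1 : (q ++ [p]).take q.length = q := by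
        rw [List.take_append_of_le_length le_rfl, List.take_of_length_le le_rfl]
      have e2 : (q ++ [p]).getD q.length [] = p := by
        rw [List.getD_eq_getElem _ _ (by simp), List.getElem_append_right le_rfl]
        simp
      rw [e1, e2]
      simp [oplus_length]

theorem oplusNeg_getD_last (f : List ℕ → Ordinal) (v : Ordinal) (q : List (List ℕ)) (d) :
    (Q.oplusNeg f v q).getD q.length d = (v, none) := by
  rw [Level2Tree.oplusNeg, List.getD_eq_getElem _ _ (by simp [oplus_length]),
    List.getElem_append_right (by rw [oplus_length])]
  simp [oplus_length]

theorem oplusNeg_getD (f : List ℕ → Ordinal) (v : Ordinal) (q : List (List ℕ)) (i : ℕ) (d)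
    (h : i < q.length) :
    (Q.oplusNeg f v q).getD i d = (f (Q.ndVal (q.take i)), some (q.getD i [])) := by
  rw [Level2Tree.oplusNeg, List.getD_eq_getElem _ _ (by simp [oplus_length]; omega),
    List.getElem_append_left (by rwa [oplus_length]), ← oplus_getD _ f q i d h,
    List.getD_eq_getElem _ _ (by rwa [oplus_length])]

theorem tr_take_subset {q : List (List ℕ)} (hq : q ∈ Q.dom) (n : ℕ) (h : n ≤ q.length) :
    Q.tr (q.take n) ⊆ Q.tr q := by
  obtain ⟨d, hd⟩ : ∃ d, n + d = q.length := ⟨q.length - n, by omega⟩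
  clear h
  induction d generalizing n with
  | zero => rw [List.take_of_length_le (by omega)]
  | succ d ih =>
    obtain ⟨s, -, hs2⟩ := Q.compl q hq n (by omega)
    refine subset_trans ?_ (ih (n + 1) (by omega))
    rw [hs2]
    exact Set.subset_insert _ _

end Level2Tree
end Aux5
section Aux6
open List

theorem ofFn_snoc {β : Type*} (x : ℕ → β) (n : ℕ) :
    (List.ofFn fun i : Fin (n + 1) => x i) = (List.ofFn fun i : Fin n => x i) ++ [x n] := by
  rw [List.ofFn_succ']
  simp [List.concat_eq_append]

theorem respectsP1_respects {P : Set (List ℕ)} {t : Option (List ℕ)}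
    {f : List ℕ → Ordinal} {v : Ordinal} (h : RespectsP1 P t f v) : Respects1 P f := by
  cases t <;> exact h.1

theorem no_bk_desc_of_finite {T : Set (List ℕ)} (hfin : T.Finite) :
    ¬ ∃ x : ℕ → List ℕ, (∀ k, x k ∈ T) ∧ ∀ k, BKlt (x (k + 1)) (x k) := by
  rintro ⟨x, hx, hd⟩
  obtain ⟨i, j, hij, hxy⟩ := Set.Finite.exists_lt_map_eq_of_forall_mem hx hfin
  have := desc_chain bklt_trans hd i j hij
  rw [hxy] at this
  exact bklt_irrefl _ this

namespace Level2Tree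
variable (Q : Level2Tree)

theorem tr_snoc {q : List (List ℕ)} {p : List ℕ} (hqp : q ++ [p] ∈ Q.dom) :
    ∃ s, Q.nd q = some s ∧ Q.tr (q ++ [p]) = insert s (Q.tr q) := by
  obtain ⟨s, h1, h2⟩ := Q.compl (q ++ [p]) hqp q.length (by simp)
  rw [List.take_left] at h1 h2
  refine ⟨s, h1, ?_⟩
  rw [List.take_of_length_le (by simp)] at h2
  exact h2

theorem rep_mem_cases {X : List (Ordinal × Option (List ℕ))} (hX : X ∈ Q.rep) :
    ∃ q ∈ Q.dom, ∃ f, Respects1 (Q.tr q) f ∧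
      (X = Q.oplus f q ∨ ∃ v, X = Q.oplusNeg f v q) := by
  rcases hX with ⟨q, hq, f, hf, rfl⟩ | ⟨q, hq, f, v, hf, rfl⟩
  · exact ⟨q, hq, f, hf, Or.inl rfl⟩
  · exact ⟨q, hq, f, respectsP1_respects hf, Or.inr ⟨v, rfl⟩⟩

end Level2Tree

/-- Backward direction: a wellordering gives Π¹₂-wellfoundedness. -/
theorem backward_dir (P : Set (List ℕ)) (hP : IsLevel1Tree P) (Q : Level2Tree)
    (h : IsWellOrder {x // x ∈ RepLe2 P Q} (fun a b => RepLe2lt a.1 b.1)) :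
    Pi12WFle2 P Q := by
  have hwf : WellFounded (fun a b : {x // x ∈ RepLe2 P Q} => RepLe2lt a.1 b.1) :=
    h.wf
  have nodesc : ∀ c : ℕ → RepLe2Elt, (∀ k, c k ∈ RepLe2 P Q) →
      (∀ k, RepLe2lt (c (k + 1)) (c k)) → False := by
    intro c hc hd
    obtain ⟨b, ⟨k, rfl⟩, hmin⟩ := hwf.has_min
      (Set.range (fun k => (⟨c k, hc k⟩ : {x // x ∈ RepLe2 P Q}))) ⟨_, ⟨0, rfl⟩⟩
    exact hmin _ ⟨k + 1, rfl⟩ (hd k)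
  refine ⟨?_, ?_, ?_⟩
  · -- Pi11WF P
    rintro ⟨x, hx⟩
    apply nodesc (fun k => Sum.inl ((List.ofFn fun i : Fin (k + 1) => x i), none))
    · intro k
      exact hx (k + 1) (by omega)
    · intro k
      apply Sum.Lex.inl
      left
      rw [ofFn_snoc]
      exact bk_append _ _ _
  · -- clause (i)
    intro q hq
    rintro ⟨x, hx⟩
    set pre : ℕ → List ℕ := fun n => List.ofFn fun i : Fin n => x i with hpre
    have hmem : ∀ n, 0 < n → q ++ [pre n] ∈ Q.dom := fun n hn => hx n hn
    obtain ⟨s, hnd, htr1⟩ := Q.tr_snoc (hmem 1 (by omega))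
    have htr : ∀ n, 0 < n → Q.tr (q ++ [pre n]) = insert s (Q.tr q) := by
      intro n hn
      obtain ⟨s', hnd', htr'⟩ := Q.tr_snoc (hmem n hn)
      rw [hnd] at hnd'
      rw [htr', (Option.some.injEq _ _).mp hnd']
    have hfin : (insert s (Q.tr q)).Finite := (Q.ptree q hq).1.insert s
    obtain ⟨f, hf⟩ := exists_respect _ (no_bk_desc_of_finite hfin)
    apply nodesc (fun n => Sum.inr (Q.oplus f (q ++ [pre (n + 1)])))
    · intro n
      exact Or.inl ⟨q ++ [pre (n + 1)], hmem (n + 1) (by omega), f,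
        by rw [htr (n + 1) (by omega)]; exact hf, rfl⟩
    · intro n
      apply Sum.Lex.inr
      show BKltBy entryLt _ _
      rw [Q.oplus_snoc, Q.oplus_snoc]
      apply bk_append_left
      left
      right
      refine ⟨rfl, ?_⟩
      show BKlt (pre (n + 2)) (pre (n + 1))
      rw [hpre]
      simp only
      rw [ofFn_snoc]
      exact bk_append _ _ _
  · -- clause (ii)
    intro y hy
    intro hPi
    set U : Set (List ℕ) := ⋃ n : ℕ, Q.tr (List.ofFn fun i : Fin n => y i) with hU
    have hclU : ∀ s ∈ U, ∀ n, 0 < n → n ≤ s.length → s.take n ∈ U := by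
      intro s hs n hn hns
      rw [hU] at hs ⊢
      obtain ⟨S, ⟨m, rfl⟩, hsm⟩ := hs
      exact Set.mem_iUnion.mpr ⟨m, level1_take_mem (Q.ptree _ (hy m)).2.1 s hsm n hn hns⟩
    obtain ⟨f, hf⟩ := exists_respect U (no_bk_desc_of_pi11wf hPi hclU)
    apply nodesc (fun n => Sum.inr (Q.oplus f (List.ofFn fun i : Fin n => y i)))
    · intro n
      refine Or.inl ⟨_, hy n, f, respects1_mono ?_ hf, rfl⟩
      exact Set.subset_iUnion (fun n => Q.tr (List.ofFn fun i : Fin n => y i)) n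
    · intro n
      apply Sum.Lex.inr
      show BKltBy entryLt _ _
      rw [ofFn_snoc, Q.oplus_snoc]
      exact bk_append _ _ _

end Aux6
section Aux7
open List

theorem optNatLt_trans : ∀ a b c, optNatLt a b → optNatLt b c → optNatLt a c := by
  rintro (_ | a) (_ | b) (_ | c) h1 h2 <;> simp [optNatLt] at * <;> omega

theorem optNatLt_irrefl : ∀ a, ¬ optNatLt a a := by
  rintro (_ | a) h <;> simp [optNatLt] at h

theorem optNatLt_trichot : ∀ a b, optNatLt a b ∨ a = b ∨ optNatLt b a := by
  rintro (_ | a) (_ | b)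
  · right; left; rfl
  · right; right; trivial
  · left; trivial
  · rcases Nat.lt_trichotomy a b with h | h | h
    · left; exact h
    · right; left; rw [h]
    · right; right; exact h

theorem rep1lt_trans : ∀ a b c, Rep1lt a b → Rep1lt b c → Rep1lt a c := by
  rintro ⟨a1, a2⟩ ⟨b1, b2⟩ ⟨c1, c2⟩ (h1 | ⟨e1, h1⟩) (h2 | ⟨e2, h2⟩)
  · exact Or.inl (bklt_trans _ _ _ h1 h2)
  · exact Or.inl (e2 ▸ h1)
  · exact Or.inl (e1 ▸ h2)
  · exact Or.inr ⟨e1.trans e2, optNatLt_trans _ _ _ h1 h2⟩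

theorem rep1lt_irrefl : ∀ a, ¬ Rep1lt a a := by
  rintro ⟨a1, a2⟩ (h | ⟨-, h⟩)
  · exact bklt_irrefl _ h
  · exact optNatLt_irrefl _ h

theorem rep1lt_trichot : ∀ a b, Rep1lt a b ∨ a = b ∨ Rep1lt b a := by
  rintro ⟨a1, a2⟩ ⟨b1, b2⟩
  rcases bklt_trichot a1 b1 with h | rfl | h
  · exact Or.inl (Or.inl h)
  · rcases optNatLt_trichot a2 b2 with h | rfl | h
    · exact Or.inl (Or.inr ⟨rfl, h⟩)
    · exact Or.inr (Or.inl rfl)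
    · exact Or.inr (Or.inr (Or.inr ⟨rfl, h⟩))
  · exact Or.inr (Or.inr (Or.inl h))

theorem rep2lt_trans : ∀ a b c, Rep2lt a b → Rep2lt b c → Rep2lt a c :=
  fun a b c h1 h2 => bk_trans entryLt_trans b a c h1 h2

theorem rep2lt_irrefl : ∀ a, ¬ Rep2lt a a := bk_irrefl entryLt_irrefl

theorem rep2lt_trichot : ∀ a b, Rep2lt a b ∨ a = b ∨ Rep2lt b a :=
  bk_trichot entryLt_trichot

theorem repLe2lt_trans : ∀ a b c, RepLe2lt a b → RepLe2lt b c → RepLe2lt a c := by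
  rintro (a | a) (b | b) (c | c) h1 h2
  · exact Sum.Lex.inl (rep1lt_trans _ _ _ (Sum.lex_inl_inl.mp h1) (Sum.lex_inl_inl.mp h2))
  · exact Sum.Lex.sep _ _
  · exact absurd h2 Sum.lex_inr_inl
  · exact Sum.Lex.sep _ _
  · exact absurd h1 Sum.lex_inr_inl
  · exact absurd h1 Sum.lex_inr_inl
  · exact absurd h2 Sum.lex_inr_inl
  · exact Sum.Lex.inr (rep2lt_trans _ _ _ (Sum.lex_inr_inr.mp h1) (Sum.lex_inr_inr.mp h2))

theorem repLe2lt_irrefl : ∀ a, ¬ RepLe2lt a a := by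
  rintro (a | a) h <;> simp only [RepLe2lt, Sum.lex_inl_inl, Sum.lex_inr_inr] at h
  · exact rep1lt_irrefl _ h
  · exact rep2lt_irrefl _ h

theorem repLe2lt_trichot : ∀ a b, RepLe2lt a b ∨ a = b ∨ RepLe2lt b a := by
  rintro (a | a) (b | b)
  · rcases rep1lt_trichot a b with h | h | h
    · exact Or.inl (Sum.Lex.inl h)
    · exact Or.inr (Or.inl (by rw [h]))
    · exact Or.inr (Or.inr (Sum.Lex.inl h))
  · exact Or.inl (Sum.Lex.sep _ _)
  · exact Or.inr (Or.inr (Sum.Lex.sep _ _))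
  · rcases rep2lt_trichot a b with h | h | h
    · exact Or.inl (Sum.Lex.inr h)
    · exact Or.inr (Or.inl (by rw [h]))
    · exact Or.inr (Or.inr (Sum.Lex.inr h))

theorem ofFn_take {β : Type*} (g : ℕ → β) (n m : ℕ) (h : m ≤ n) :
    (List.ofFn fun i : Fin n => g i).take m = List.ofFn fun i : Fin m => g i := by
  apply List.ext_getElem
  · simp [List.length_take]; omega
  · intro i h1 h2
    rw [List.getElem_take, List.getElem_ofFn, List.getElem_ofFn]

theorem take_succ_getD {β : Type*} (q : List β) (m : ℕ) (h : m < q.length) (d : β) :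
    q.take (m + 1) = q.take m ++ [q.getD m d] := by
  rw [List.take_succ, List.getElem?_eq_getElem h, List.getD_eq_getElem _ _ h]
  rfl

end Aux7
section Aux8
open List

namespace Level2Tree
variable (Q : Level2Tree)

theorem rep_take_struct {X : List (Ordinal × Option (List ℕ))} (hX : X ∈ Q.rep)
    {n : ℕ} (hn : n < X.length) :
    ∃ q ∈ Q.dom, ∃ f, Respects1 (Q.tr q) f ∧ n ≤ q.length ∧
      X.take n = Q.oplus f (q.take n) ∧
      (n < q.length → X.getD n default = (f (Q.ndVal (q.take n)), some (q.getD n [])) ∧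
        q.take n ++ [q.getD n []] ∈ Q.dom) ∧
      (n = q.length → ∃ v, X.getD n default = (v, none)) ∧
      X.length ≤ q.length + 1 := by
  obtain ⟨q, hq, f, hf, hc⟩ := Q.rep_mem_cases hX
  refine ⟨q, hq, f, hf, ?_, ?_, ?_, ?_, ?_⟩
  case _ =>
    rcases hc with rfl | ⟨v, rfl⟩
    · rw [oplus_length] at hn; omega
    · rw [oplusNeg_length] at hn; omega
  case _ =>
    rcases hc with rfl | ⟨v, rfl⟩
    · exact Q.oplus_take f q n (by rw [oplus_length] at hn; omega)
    · exact Q.oplusNeg_take f v q n (by rw [oplusNeg_length] at hn; omega)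
  case _ =>
    intro hnq
    constructor
    · rcases hc with rfl | ⟨v, rfl⟩
      · exact Q.oplus_getD f q n default hnq
      · exact Q.oplusNeg_getD f v q n default hnq
    · have : q.take (n + 1) ∈ Q.dom := Q.take_mem q hq (n + 1)
      rwa [take_succ_getD q n hnq []] at this
  case _ =>
    intro hnq
    rcases hc with rfl | ⟨v, rfl⟩
    · rw [oplus_length] at hn; omega
    · subst hnq
      exact ⟨v, Q.oplusNeg_getD_last f v q default⟩
  case _ =>
    rcases hc with rfl | ⟨v, rfl⟩
    · rw [oplus_length]; omega
    · rw [oplusNeg_length]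

theorem rep2_nodesc_caseB (hQ : Q.Pi12WF) (X : ℕ → List (Ordinal × Option (List ℕ)))
    (hX : ∀ k, X k ∈ Q.rep) (m : ℕ) (t : ℕ → ℕ)
    (hlen : ∀ j, m < (X (t j)).length)
    (htk : ∀ j, (X (t j)).take m = (X (t 0)).take m)
    (hdrop : ∀ j, entryLt ((X (t (j + 1))).getD m default) ((X (t j)).getD m default)) :
    False := by
  classical
  set r : List (List ℕ) := ((X (t 0)).take m).map (fun en => en.2.getD []) with hr
  have hstruct : ∀ j, ∃ q ∈ Q.dom, ∃ f, Respects1 (Q.tr q) f ∧ m ≤ q.length ∧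
      (X (t j)).take m = Q.oplus f (q.take m) ∧
      (m < q.length → (X (t j)).getD m default =
          (f (Q.ndVal (q.take m)), some (q.getD m [])) ∧
        q.take m ++ [q.getD m []] ∈ Q.dom) ∧
      (m = q.length → ∃ v, (X (t j)).getD m default = (v, none)) ∧
      (X (t j)).length ≤ q.length + 1 :=
    fun j => Q.rep_take_struct (hX (t j)) (hlen j)
  have hrtake : ∀ j, ∀ q ∈ Q.dom, ∀ f, m ≤ q.length →
      (X (t j)).take m = Q.oplus f (q.take m) → q.take m = r := by
    intro j q hq f hmq htkj
    rw [hr, ← htk j, htkj, Q.nodes_oplus]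
  have hrdom : r ∈ Q.dom := by
    obtain ⟨q, hq, f, -, hmq, htkj, -, -, -⟩ := hstruct 0
    rw [← hrtake 0 q hq f hmq htkj]
    exact Q.take_mem q hq m
  set z : ℕ → Ordinal × Option (List ℕ) := fun j => (X (t j)).getD m default with hz
  have hzmem : ∀ j, (z j).2 = none ∨ ∃ a, r ++ [a] ∈ Q.dom ∧ (z j).2 = some a := by
    intro j
    obtain ⟨q, hq, f, -, hmq, htkj, hlt', heq', -⟩ := hstruct j
    rcases Nat.lt_or_ge m q.length with hmlt | hmge
    · right
      obtain ⟨hgd, hmem⟩ := hlt' hmlt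
      refine ⟨q.getD m [], ?_, by rw [hz]; simp only; rw [hgd]⟩
      rwa [hrtake j q hq f hmq htkj] at hmem
    · left
      obtain ⟨v, hv⟩ := heq' (by omega)
      rw [hz]; simp only; rw [hv]
  have hnd : ¬ ∃ t' : ℕ → ℕ, StrictMono t' ∧ ∀ j, (z (t' (j + 1))).1 < (z (t' j)).1 := by
    rintro ⟨t', ht', hRdesc⟩
    exact noDesc_of_wf Ordinal.lt_wf (fun j => (z (t' j)).1) hRdesc
  obtain ⟨K, hK⟩ := lexdesc (· < · : Ordinal → Ordinal → Prop) optNodeLt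
    (fun a b c => lt_trans) z (fun k => hdrop k) hnd
  set w : ℕ → Option (List ℕ) := fun k => (z (K + k)).2 with hw
  have hwdesc : ∀ k, optNodeLt (w (k + 1)) (w k) := by
    intro k
    have := (hK (K + k) (by omega)).2
    simpa [hw, Nat.add_assoc] using this
  have hwsome : ∀ k, ∃ a, w k = some a ∧ r ++ [a] ∈ Q.dom := by
    intro k
    rcases hzmem (K + k) with hnone | ⟨a, ha, hsome⟩
    · exfalso
      have := hwdesc k
      rw [show w k = none from hnone] at this
      cases hcon : w (k + 1) <;> rw [hcon] at this <;> exact this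
    · exact ⟨a, hsome, ha⟩
  choose a ha hadom using hwsome
  have hadesc : ∀ k, BKlt (a (k + 1)) (a k) := by
    intro k
    have := hwdesc k
    rw [ha k, ha (k + 1)] at this
    exact this
  exact no_bk_desc_of_pi11wf (hQ.1 r hrdom)
    (level1_take_mem (Q.lvl1 r hrdom)) ⟨a, hadom, hadesc⟩

end Level2Tree
end Aux8
section Aux9
open List

namespace Level2Tree
variable (Q : Level2Tree)

theorem rep2_nodesc_caseA (hQ : Q.Pi12WF) (X : ℕ → List (Ordinal × Option (List ℕ)))
    (hX : ∀ k, X k ∈ Q.rep) (y : ℕ → Ordinal × Option (List ℕ))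
    (hy : ∀ n, ∃ K, ∀ k, K ≤ k → n ≤ (X k).length ∧
      (X k).take n = List.ofFn (fun i : Fin n => y i)) :
    False := by
  classical
  have hsome : ∀ n, ∃ p, (y n).2 = some p := by
    intro n
    obtain ⟨K, hK⟩ := hy (n + 2)
    obtain ⟨hlen, htk⟩ := hK K le_rfl
    have hnlen : n < (X K).length := by omega
    have hentry : (X K).getD n default = y n := by
      have h1 := List.getElem_of_eq htk (show n < ((X K).take (n + 2)).length by
        rw [List.length_take]; omega)
      rw [List.getElem_take, List.getElem_ofFn] at h1
      rw [List.getD_eq_getElem _ _ hnlen, h1]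
    obtain ⟨q, hq, f, hf, hmq, htake, hlt', hlast, hlb⟩ := Q.rep_take_struct (hX K) hnlen
    rcases Nat.lt_or_ge n q.length with h | h
    · obtain ⟨hgd, -⟩ := hlt' h
      exact ⟨q.getD n [], by rw [← hentry, hgd]⟩
    · exfalso
      have hneq : n = q.length := by omega
      omega
  choose Yn hYn using hsome
  have hwit : ∀ n, ∃ q ∈ Q.dom, ∃ f, Respects1 (Q.tr q) f ∧ n ≤ q.length ∧
      q.take n = (List.ofFn fun i : Fin n => Yn i) ∧
      Q.oplus f (q.take n) = List.ofFn (fun i : Fin n => y i) := by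
    intro n
    obtain ⟨K, hK⟩ := hy (n + 2)
    obtain ⟨hlen2, htk2⟩ := hK K le_rfl
    have hnlen : n < (X K).length := by omega
    obtain ⟨q, hq, f, hf, hmq, htake, -, -, -⟩ := Q.rep_take_struct (hX K) hnlen
    have htkn : (X K).take n = List.ofFn (fun i : Fin n => y i) := by
      have h2 := congrArg (fun l => List.take n l) htk2
      rw [List.take_take, Nat.min_eq_left (by omega)] at h2
      rw [h2, ofFn_take y (n + 2) n (by omega)]
    have hoplus : Q.oplus f (q.take n) = List.ofFn (fun i : Fin n => y i) := by
      rw [← htake, htkn]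
    have hqtk : q.take n = List.ofFn fun i : Fin n => Yn i := by
      have h3 := congrArg (List.map (fun en => en.2.getD [])) hoplus
      rw [Q.nodes_oplus, List.map_ofFn] at h3
      rw [h3]
      apply List.ext_getElem
      · simp
      · intro i h1 h2
        rw [List.getElem_ofFn, List.getElem_ofFn]
        show ((y i).2).getD [] = Yn i
        rw [hYn i]
        rfl
    exact ⟨q, hq, f, hf, hmq, hqtk, hoplus⟩
  have hYdom : ∀ n, (List.ofFn fun i : Fin n => Yn i) ∈ Q.dom := by
    intro n
    obtain ⟨q, hq, f, -, hmq, hqtk, -⟩ := hwit n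
    rw [← hqtk]
    exact Q.take_mem q hq n
  set node : ℕ → List ℕ := fun n => Q.ndVal (List.ofFn fun i : Fin n => Yn i) with hnode
  have hnodemem : ∀ q, q ∈ Q.dom → ∀ N, N ≤ q.length →
      q.take N = (List.ofFn fun i : Fin N => Yn i) → ∀ i, i < N →
      node i ∈ Q.tr q ∧ Q.ndVal (q.take i) = node i := by
    intro q hq N hNq hqtk i hiN
    have hqi : q.take i = List.ofFn fun j : Fin i => Yn j := by
      have h4 : (q.take N).take i = q.take i := by
        rw [List.take_take, Nat.min_eq_left (by omega)]
      rw [← h4, hqtk, ofFn_take Yn N i (by omega)]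
    obtain ⟨s, hs1, hs2⟩ := Q.compl q hq i (by omega)
    have hnd : Q.ndVal (q.take i) = node i := by
      rw [hnode]
      simp only
      rw [hqi]
    refine ⟨?_, hnd⟩
    have hsmem : s ∈ Q.tr (q.take (i + 1)) := by rw [hs2]; exact Set.mem_insert _ _
    have hseq : s = node i := by
      rw [← hnd, Level2Tree.ndVal, hs1]
      rfl
    rw [← hseq]
    exact Q.tr_take_subset hq (i + 1) (by omega) hsmem
  have hbeta : ∀ N q f, q ∈ Q.dom → N ≤ q.length →
      Q.oplus f (q.take N) = List.ofFn (fun i : Fin N => y i) → ∀ i, i < N →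
      f (Q.ndVal (q.take i)) = (y i).1 := by
    intro N q f hq hNq hop i hiN
    have hlen3 : i < (q.take N).length := by rw [List.length_take]; omega
    have h1 := congrArg (fun l => l.getD i default) hop
    rw [Q.oplus_getD f (q.take N) i default hlen3] at h1
    have h2 : (List.ofFn fun i : Fin N => y i).getD i default = y i := by
      rw [List.getD_eq_getElem _ _ (by simp; omega), List.getElem_ofFn]
    rw [h2] at h1
    have h4 : (q.take N).take i = q.take i := by
      rw [List.take_take, Nat.min_eq_left (by omega)]
    rw [h4] at h1
    exact congrArg Prod.fst h1
  have hKEY : ∀ i j, BKlt (node i) (node j) → (y i).1 < (y j).1 := by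
    intro i j hij
    set N := max i j + 1 with hN
    obtain ⟨q, hq, f, hf, hNq, hqtk, hop⟩ := hwit N
    have h_i := hnodemem q hq N hNq hqtk i (by omega)
    have h_j := hnodemem q hq N hNq hqtk j (by omega)
    have hb_i := hbeta N q f hq hNq hop i (by omega)
    have hb_j := hbeta N q f hq hNq hop j (by omega)
    rw [h_i.2] at hb_i
    rw [h_j.2] at hb_j
    rw [← hb_i, ← hb_j]
    exact hf.2 (node i) h_i.1 (node j) h_j.1 hij
  have hnPi := hQ.2 Yn hYdom
  rw [Pi11WF] at hnPi
  obtain ⟨b, hb⟩ := not_not.mp hnPi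
  have htrchar : ∀ n, ∀ u ∈ Q.tr (List.ofFn fun i : Fin n => Yn i), ∃ i, i < n ∧ u = node i := by
    intro n
    induction n with
    | zero =>
      intro u hu
      rw [List.ofFn_zero, Q.tr_nil] at hu
      exact absurd hu (Set.notMem_empty u)
    | succ n ih =>
      intro u hu
      obtain ⟨s, hs1, hs2⟩ := Q.compl (List.ofFn fun i : Fin (n + 1) => Yn i)
        (hYdom (n + 1)) n (by simp)
      have htkeq : (List.ofFn fun i : Fin (n + 1) => Yn i).take n =
          List.ofFn fun i : Fin n => Yn i := ofFn_take Yn (n + 1) n (by omega)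
      have htkeq2 : (List.ofFn fun i : Fin (n + 1) => Yn i).take (n + 1) =
          List.ofFn fun i : Fin (n + 1) => Yn i := List.take_of_length_le (by simp)
      rw [htkeq2, htkeq] at hs2
      rw [htkeq] at hs1
      rw [hs2] at hu
      rcases Set.mem_insert_iff.mp hu with rfl | hu2
      · refine ⟨n, by omega, ?_⟩
        rw [hnode]
        simp only [Level2Tree.ndVal]
        rw [hs1]
        rfl
      · obtain ⟨i, hi, rfl⟩ := ih u hu2
        exact ⟨i, by omega, rfl⟩
  have hbranchnode : ∀ m : ℕ, ∃ i, (List.ofFn fun j : Fin (m + 1) => b j) = node i := by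
    intro m
    have hbm := hb (m + 1) (by omega)
    obtain ⟨S, ⟨n, rfl⟩, hmem⟩ := hbm
    obtain ⟨i, -, heq⟩ := htrchar n _ hmem
    exact ⟨i, heq⟩
  choose I hI using hbranchnode
  have hgdesc : ∀ m, (y (I (m + 1))).1 < (y (I m)).1 := by
    intro m
    apply hKEY
    rw [← hI (m + 1), ← hI m]
    rw [ofFn_snoc b (m + 1)]
    exact bk_append _ _ _
  exact noDesc_of_wf Ordinal.lt_wf (fun m => (y (I m)).1) hgdesc

end Level2Tree
end Aux9
section Aux10
open List

theorem Level2Tree.rep2_nodesc (Q : Level2Tree) (hQ : Q.Pi12WF)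
    (X : ℕ → List (Ordinal × Option (List ℕ))) (hX : ∀ k, X k ∈ Q.rep)
    (hdesc : ∀ k, Rep2lt (X (k + 1)) (X k)) : False := by
  rcases stab entryLt_irrefl entryLt_trans X hdesc with ⟨y, hy⟩ | ⟨m, t, h1, h2, h3⟩
  · exact Q.rep2_nodesc_caseA hQ X hX y hy
  · exact Q.rep2_nodesc_caseB hQ X hX m t h1 h2 h3

/-- Forward direction: Π¹₂-wellfoundedness gives a wellordering. -/
theorem forward_dir (P : Set (List ℕ)) (hP : IsLevel1Tree P) (Q : Level2Tree)
    (hWF : Pi12WFle2 P Q) :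
    IsWellOrder {x // x ∈ RepLe2 P Q} (fun a b => RepLe2lt a.1 b.1) := by
  classical
  have nodesc : ∀ c : ℕ → {x // x ∈ RepLe2 P Q},
      (∀ k, RepLe2lt (c (k + 1)).1 (c k).1) → False := by
    intro c hd
    by_cases hall : ∀ k, ∃ bb, (c k).1 = Sum.inr bb
    · choose Xf hXf using hall
      apply Q.rep2_nodesc hWF.2 Xf
      · intro k
        have hmem := (c k).2
        rw [hXf k] at hmem
        exact hmem
      · intro k
        have hdk := hd k
        rw [hXf (k + 1), hXf k] at hdk
        exact Sum.lex_inr_inr.mp hdk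
    · push_neg at hall
      obtain ⟨k₀, hk₀⟩ := hall
      have hstart : ∃ a, (c k₀).1 = Sum.inl a := by
        cases hcc : (c k₀).1 with
        | inl a => exact ⟨a, rfl⟩
        | inr b => exact absurd hcc (hk₀ b)
      have hclaim : ∀ j, ∃ a, (c (k₀ + j)).1 = Sum.inl a := by
        intro j
        induction j with
        | zero => exact hstart
        | succ j ih =>
          obtain ⟨a', ha'⟩ := ih
          cases hc1 : (c (k₀ + j + 1)).1 with
          | inl a => exact ⟨a, rfl⟩
          | inr b =>
            exfalso
            have hdk := hd (k₀ + j)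
            rw [hc1, ha'] at hdk
            exact Sum.lex_inr_inl hdk
      choose A hA using hclaim
      apply no_rep1_desc hP hWF.1 A
      · intro j
        have hmem := (c (k₀ + j)).2
        rw [hA j] at hmem
        exact hmem
      · intro j
        have hdk := hd (k₀ + j)
        rw [hA j] at hdk
        have h2 : (c (k₀ + j + 1)).1 = Sum.inl (A (j + 1)) := hA (j + 1)
        rw [h2] at hdk
        exact Sum.lex_inl_inl.mp hdk
  haveI i1 : IsTrichotomous {x // x ∈ RepLe2 P Q} (fun a b => RepLe2lt a.1 b.1) := by
    constructor
    intro a b hab hba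
    rcases repLe2lt_trichot a.1 b.1 with h | h | h
    · exact absurd h hab
    · exact Subtype.ext h
    · exact absurd h hba
  haveI i2 : IsTrans {x // x ∈ RepLe2 P Q} (fun a b => RepLe2lt a.1 b.1) :=
    ⟨fun a b c => repLe2lt_trans a.1 b.1 c.1⟩
  haveI i3 : IsIrrefl {x // x ∈ RepLe2 P Q} (fun a b => RepLe2lt a.1 b.1) :=
    ⟨fun a => repLe2lt_irrefl a.1⟩
  haveI i4 : IsStrictOrder {x // x ∈ RepLe2 P Q} (fun a b => RepLe2lt a.1 b.1) := ⟨⟩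
  haveI i5 : IsWellFounded {x // x ∈ RepLe2 P Q} (fun a b => RepLe2lt a.1 b.1) := by
    constructor
    rw [RelEmbedding.wellFounded_iff_isEmpty]
    constructor
    intro emb
    exact nodesc (fun k => emb k) (fun k => emb.map_rel_iff.mpr (Nat.lt_succ_self k))
  exact ⟨⟩

end Aux10

/-- Assume boldface Π¹₁-determinacy. Let `Q = (P, Q₂)` be a level ≤2
tree. Then `Q` is Π¹₂-wellfounded iff `<^Q` is a wellordering of `rep(Q)`. -/
theorem stmt0 (hdet : BoldfacePi11Determinacy)
    (P : Set (List ℕ)) (hP : IsLevel1Tree P) (Q : Level2Tree) :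
    Pi12WFle2 P Q ↔
      IsWellOrder {x // x ∈ RepLe2 P Q} (fun a b => RepLe2lt a.1 b.1) := by
  exact ⟨forward_dir P hP Q, backward_dir P hP Q⟩
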